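/- Let n = 2 and α ≥ 1. There exists an allocation rule x ∈ T(σ) with value approximation ratio R_V(ρ,x) ≤ α if and only if there is no α-value conflict pair, i.e., if and only if 1/f(ρ₂(s), ρ₁(s′)) ≤ α for all profiles s ≺ s′. -/
import Mathlib


namespace Stmt16

variable {k : ℕ}

noncomputable def rho1 (v1 v2 : Fin k × Fin k → ℝ) (s : Fin k × Fin k) : ℝ :=
  v1 s / max (v1 s) (v2 s)

noncomputable def rho2 (v1 v2 : Fin k × Fin k → ℝ) (s : Fin k × Fin k) : ℝ :=
  v2 s / max (v1 s) (v2 s)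

/-- One step of the reachability relation. -/
def step (v1 v2 : Fin k × Fin k → ℝ) (p q : Fin k × Fin k) : Prop :=
  (p.2 = q.2 ∧ v1 p < v1 q) ∨ (p.1 = q.1 ∧ v2 q < v2 p)

/-- The conflict function `f`. -/
noncomputable def conflictF (u v : ℝ) : ℝ :=
  if u = 1 ∧ v = 1 then 1 else (u * v - 1) / (u + v - 2)

/-- Membership in the truthful polytope `T(σ)` (two agents). -/
def InT (v1 v2 x1 x2 : Fin k × Fin k → ℝ) : Prop :=
  (∀ s, 0 ≤ x1 s ∧ x1 s ≤ 1) ∧ (∀ s, 0 ≤ x2 s ∧ x2 s ≤ 1) ∧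
  (∀ s, x1 s + x2 s = 1) ∧
  (∀ a b c : Fin k, v1 (a, c) < v1 (b, c) → x1 (a, c) ≤ x1 (b, c)) ∧
  (∀ a c d : Fin k, v2 (a, c) < v2 (a, d) → x2 (a, c) ≤ x2 (a, d))

/-! ### Auxiliary lemmas -/

open Relation

lemma conflict_one {u v : ℝ} (h : u = 1 ∨ v = 1) : conflictF u v = 1 := by
  unfold conflictF
  split
  · rfl
  · rename_i hn
    rcases h with h | h
    · subst h
      have : ¬ v = 1 := fun hv => hn ⟨rfl, hv⟩
      rw [show (1:ℝ) * v - 1 = v - 1 by ring, show (1:ℝ) + v - 2 = v - 1 by ring,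
        div_self (sub_ne_zero.mpr this)]
    · subst h
      have : ¬ u = 1 := fun hv => hn ⟨hv, rfl⟩
      rw [show u * 1 - 1 = u - 1 by ring, show u + 1 - 2 = u - 1 by ring,
        div_self (sub_ne_zero.mpr this)]

lemma conflict_to_bound {α u v : ℝ} (hα : 1 ≤ α) (hu0 : 0 < u) (hu : u < 1)
    (hv0 : 0 < v) (hv : v < 1)
    (h : 1 / conflictF u v ≤ α) : (1/α - u) / (1 - u) ≤ (1 - 1/α) / (1 - v) := by
  have hα0 : (0:ℝ) < α := lt_of_lt_of_le one_pos hα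
  rw [conflictF, if_neg (fun hc => hu.ne hc.1), one_div, inv_div,
    div_le_iff_of_neg (by nlinarith : u * v - 1 < 0)] at h
  have h' : 2 - u - v ≤ α * (1 - u * v) := by nlinarith
  rw [div_le_div_iff₀ (by linarith) (by linarith)]
  have h2 : (1/α) * (2 - u - v) ≤ (1/α) * (α * (1 - u * v)) :=
    mul_le_mul_of_nonneg_left h' (by positivity)
  rw [← mul_assoc, one_div, inv_mul_cancel₀ hα0.ne', one_mul] at h2
  rw [one_div]
  ring_nf at h2 ⊢
  linarith

lemma bound_to_conflict {α u v t t' : ℝ} (hα : 1 ≤ α) (hu0 : 0 < u) (hu : u < 1)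
    (hv0 : 0 < v) (hv : v < 1) (htt : t ≤ t')
    (h1 : 1/α ≤ u + t * (1 - u)) (h2 : 1/α ≤ 1 - t' * (1 - v)) :
    1 / conflictF u v ≤ α := by
  have hα0 : (0:ℝ) < α := lt_of_lt_of_le one_pos hα
  rw [conflictF, if_neg (fun hc => hu.ne hc.1), one_div, inv_div,
    div_le_iff_of_neg (by nlinarith : u * v - 1 < 0)]
  have hβ : (1/α) * α = 1 := by field_simp
  have k1 : (1/α - u) * (1 - v) ≤ t * (1 - u) * (1 - v) := by nlinarith
  have k2 : t' * (1 - u) * (1 - v) ≤ (1 - 1/α) * (1 - u) := by nlinarith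
  have k3 := mul_le_mul_of_nonneg_right htt (by nlinarith : (0:ℝ) ≤ (1-u)*(1-v))
  have k4 : (1/α) * (2 - u - v) ≤ 1 - u * v := by nlinarith
  have k5 := mul_le_mul_of_nonneg_left k4 hα0.le
  rw [← mul_assoc, mul_one_div, div_self hα0.ne', one_mul] at k5
  nlinarith [k5]

variable {v1 v2 : Fin k × Fin k → ℝ}

lemma rho1_pos (hv1 : ∀ s, 0 < v1 s) (s) : 0 < rho1 v1 v2 s :=
  div_pos (hv1 s) (lt_max_of_lt_left (hv1 s))
lemma rho2_pos (hv1 : ∀ s, 0 < v1 s) (hv2 : ∀ s, 0 < v2 s) (s) : 0 < rho2 v1 v2 s :=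
  div_pos (hv2 s) (lt_max_of_lt_left (hv1 s))
lemma rho1_le_one (hv1 : ∀ s, 0 < v1 s) (s) : rho1 v1 v2 s ≤ 1 :=
  div_le_one_of_le₀ (le_max_left _ _) (le_max_of_le_left (hv1 s).le)
lemma rho2_le_one (hv1 : ∀ s, 0 < v1 s) (s) : rho2 v1 v2 s ≤ 1 :=
  div_le_one_of_le₀ (le_max_right _ _) (le_max_of_le_left (hv1 s).le)
lemma rho_max (hv1 : ∀ s, 0 < v1 s) (hv2 : ∀ s, 0 < v2 s) (s) :
    rho1 v1 v2 s = 1 ∨ rho2 v1 v2 s = 1 := by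
  rcases max_cases (v1 s) (v2 s) with ⟨h, _⟩ | ⟨h, _⟩
  · exact Or.inl (by rw [rho1, h, div_self (hv1 s).ne'])
  · exact Or.inr (by rw [rho2, h, div_self (hv2 s).ne'])

/-- The per-profile lower bound on the allocation to agent 1. -/
noncomputable def Lfun (v1 v2 : Fin k × Fin k → ℝ) (α : ℝ) (s : Fin k × Fin k) : ℝ :=
  max 0 ((1/α - rho2 v1 v2 s) / (1 - rho2 v1 v2 s))

open scoped Classical in
/-- The constructed allocation for agent 1. -/
noncomputable def x1f [NeZero k] (v1 v2 : Fin k × Fin k → ℝ) (α : ℝ)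
    (s : Fin k × Fin k) : ℝ :=
  Finset.univ.sup' Finset.univ_nonempty
    (fun t => if Relation.ReflTransGen (step v1 v2) t s then Lfun v1 v2 α t else 0)

lemma Lfun_nonneg {α : ℝ} (s : Fin k × Fin k) : 0 ≤ Lfun v1 v2 α s := le_max_left _ _

lemma Lfun_eq_zero {α : ℝ} {s : Fin k × Fin k} (h : rho2 v1 v2 s = 1) :
    Lfun v1 v2 α s = 0 := by
  rw [Lfun, h, sub_self, div_zero, max_self]

lemma Lfun_le_one {α : ℝ} (hα : 1 ≤ α) (hv1 : ∀ s, 0 < v1 s) (s : Fin k × Fin k) :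
    Lfun v1 v2 α s ≤ 1 := by
  have hα0 : (0:ℝ) < α := lt_of_lt_of_le one_pos hα
  have hinv : 1/α ≤ 1 := by rw [div_le_one hα0]; exact hα
  by_cases h : rho2 v1 v2 s = 1
  · rw [Lfun_eq_zero h]; norm_num
  · have hu : rho2 v1 v2 s < 1 := lt_of_le_of_ne (rho2_le_one hv1 s) h
    exact max_le zero_le_one ((div_le_one (by linarith)).mpr (by linarith))

lemma x1f_ge [NeZero k] {α : ℝ} {t s : Fin k × Fin k}
    (h : Relation.ReflTransGen (step v1 v2) t s) :
    Lfun v1 v2 α t ≤ x1f v1 v2 α s := by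
  classical
  unfold x1f
  have := Finset.le_sup' (s := (Finset.univ : Finset (Fin k × Fin k)))
    (fun c => if Relation.ReflTransGen (step v1 v2) c s then Lfun v1 v2 α c else 0)
    (Finset.mem_univ t)
  rwa [if_pos h] at this

lemma x1f_nonneg [NeZero k] {α : ℝ} (s : Fin k × Fin k) : 0 ≤ x1f v1 v2 α s :=
  le_trans (Lfun_nonneg s) (x1f_ge Relation.ReflTransGen.refl)

lemma x1f_le_one [NeZero k] {α : ℝ} (hα : 1 ≤ α) (hv1 : ∀ s, 0 < v1 s)
    (s : Fin k × Fin k) : x1f v1 v2 α s ≤ 1 := by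
  classical
  unfold x1f
  apply Finset.sup'_le
  intro c _
  split_ifs
  · exact Lfun_le_one hα hv1 c
  · exact zero_le_one

lemma x1f_mono [NeZero k] {α : ℝ} {p q : Fin k × Fin k}
    (h : Relation.ReflTransGen (step v1 v2) p q) :
    x1f v1 v2 α p ≤ x1f v1 v2 α q := by
  classical
  conv_lhs => unfold x1f
  apply Finset.sup'_le
  intro c _
  split_ifs with hc
  · exact x1f_ge (hc.trans h)
  · exact x1f_nonneg q

/-- with `n = 2`, a truthful allocation rule of value approximation ratio
at most `α` exists iff there is no `α`-value conflict pair. -/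
theorem stmt16 (k : ℕ) [NeZero k] (α : ℝ) (hα : 1 ≤ α)
    (v1 v2 : Fin k × Fin k → ℝ)
    (hv1 : ∀ s, 0 < v1 s) (hv2 : ∀ s, 0 < v2 s) :
    (∃ x1 x2 : Fin k × Fin k → ℝ, InT v1 v2 x1 x2 ∧
      Finset.univ.sup' Finset.univ_nonempty
        (fun s : Fin k × Fin k =>
          (x1 s * rho1 v1 v2 s + x2 s * rho2 v1 v2 s)⁻¹) ≤ α) ↔
    (∀ s s', Relation.TransGen (step v1 v2) s s' →
      1 / conflictF (rho2 v1 v2 s) (rho1 v1 v2 s') ≤ α) := by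
  have hα0 : (0:ℝ) < α := lt_of_lt_of_le one_pos hα
  constructor
  · rintro ⟨x1, x2, ⟨hx1b, hx2b, hsum, hm1, hm2⟩, hsup⟩ s s' htr
    -- performance lower bound at every profile
    have hperf : ∀ s, 1/α ≤ x1 s * rho1 v1 v2 s + x2 s * rho2 v1 v2 s := by
      intro s
      set P := x1 s * rho1 v1 v2 s + x2 s * rho2 v1 v2 s with hP
      have hr1 := rho1_pos (v2 := v2) hv1 s
      have hr2 := rho2_pos hv1 hv2 s
      have hmin : min (rho1 v1 v2 s) (rho2 v1 v2 s) ≤ P := by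
        have a1 := mul_nonneg (hx1b s).1 (sub_nonneg.mpr (min_le_left (rho1 v1 v2 s) (rho2 v1 v2 s)))
        have a2 := mul_nonneg (hx2b s).1 (sub_nonneg.mpr (min_le_right (rho1 v1 v2 s) (rho2 v1 v2 s)))
        have a3 : (min (rho1 v1 v2 s) (rho2 v1 v2 s)) * (x1 s + x2 s)
            = min (rho1 v1 v2 s) (rho2 v1 v2 s) := by rw [hsum s, mul_one]
        nlinarith [a1, a2, a3]
      have hpos : 0 < P := lt_of_lt_of_le (lt_min hr1 hr2) hmin
      have hinv : P⁻¹ ≤ α :=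
        le_trans (Finset.le_sup' (fun s : Fin k × Fin k =>
          (x1 s * rho1 v1 v2 s + x2 s * rho2 v1 v2 s)⁻¹) (Finset.mem_univ s)) hsup
      have h1 : 1 ≤ P * α := by
        have := mul_le_mul_of_nonneg_left hinv hpos.le
        rwa [mul_inv_cancel₀ hpos.ne'] at this
      rw [div_le_iff₀ hα0]
      linarith
    -- monotonicity of x1 along steps
    have hstep : ∀ p q, step v1 v2 p q → x1 p ≤ x1 q := by
      rintro ⟨a, c⟩ ⟨b, d⟩ (⟨h2, hlt⟩ | ⟨h1, hlt⟩)
      · dsimp at h2; subst h2; exact hm1 a b c hlt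
      · dsimp at h1; subst h1
        have := hm2 a d c hlt
        have e1 := hsum (a, c); have e2 := hsum (a, d)
        linarith
    have hmono : x1 s ≤ x1 s' := by
      induction htr with
      | single hs => exact hstep _ _ hs
      | tail _ hs ih => exact le_trans ih (hstep _ _ hs)
    set u := rho2 v1 v2 s with hu
    set v := rho1 v1 v2 s' with hv
    by_cases hu1 : u = 1
    · rw [conflict_one (Or.inl hu1)]; simpa using hα
    by_cases hv1' : v = 1
    · rw [conflict_one (Or.inr hv1')]; simpa using hα
    have hult : u < 1 := lt_of_le_of_ne (rho2_le_one hv1 s) hu1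
    have hvlt : v < 1 := lt_of_le_of_ne (rho1_le_one hv1 s') hv1'
    have hr1s : rho1 v1 v2 s = 1 := (rho_max hv1 hv2 s).resolve_right hu1
    have hr2s' : rho2 v1 v2 s' = 1 := (rho_max hv1 hv2 s').resolve_left hv1'
    have h1 : 1/α ≤ u + x1 s * (1 - u) := by
      have := hperf s
      rw [hr1s] at this
      have := hsum s
      nlinarith [hperf s, hsum s, hr1s]
    have h2 : 1/α ≤ 1 - x1 s' * (1 - v) := by
      have e := hperf s'
      rw [hr2s'] at e
      have e2 := hsum s'
      nlinarith
    exact bound_to_conflict hα (rho2_pos hv1 hv2 s) hult (rho1_pos hv1 s') hvlt hmono h1 h2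
  · intro hyp
    refine ⟨x1f v1 v2 α, fun s => 1 - x1f v1 v2 α s, ⟨?_, ?_, ?_, ?_, ?_⟩, ?_⟩
    · exact fun s => ⟨x1f_nonneg s, x1f_le_one hα hv1 s⟩
    · intro s
      dsimp only
      refine ⟨by linarith [x1f_le_one (v1 := v1) (v2 := v2) (α := α) hα hv1 s],
        by linarith [x1f_nonneg (v1 := v1) (v2 := v2) (α := α) s]⟩
    · intro s; ring
    · intro a b c hlt
      exact x1f_mono (Relation.ReflTransGen.single (Or.inl ⟨rfl, hlt⟩))
    · intro a c d hlt
      have : x1f v1 v2 α (a, d) ≤ x1f v1 v2 α (a, c) :=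
        x1f_mono (Relation.ReflTransGen.single (Or.inr ⟨rfl, hlt⟩))
      dsimp only
      linarith
    · apply Finset.sup'_le
      intro s _
      set t := x1f v1 v2 α s with ht
      have hperf : 1/α ≤ t * rho1 v1 v2 s + (1 - t) * rho2 v1 v2 s := by
        by_cases hr1 : rho1 v1 v2 s = 1
        · -- agent 1 is the best: lower bound on t suffices
          rw [hr1]
          set u := rho2 v1 v2 s with hu
          by_cases hc : 1/α ≤ u
          · have := x1f_nonneg (v1 := v1) (v2 := v2) (α := α) s
            have hu1 := rho2_le_one (v2 := v2) hv1 s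
            nlinarith
          · push_neg at hc
            have hinv : 1/α ≤ 1 := by rw [div_le_one hα0]; exact hα
            have hult : u < 1 := lt_of_lt_of_le hc hinv
            have hL : (1/α - u) / (1 - u) ≤ t :=
              le_trans (le_max_right _ _) (x1f_ge Relation.ReflTransGen.refl)
            have hcc := mul_le_mul_of_nonneg_right hL (by linarith : (0:ℝ) ≤ 1 - u)
            rw [div_mul_cancel₀ _ (by linarith : (1:ℝ) - u ≠ 0)] at hcc
            nlinarith
        · -- agent 2 is the best: need the upper bound on t
          have hr2 : rho2 v1 v2 s = 1 := (rho_max hv1 hv2 s).resolve_left hr1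
          set v := rho1 v1 v2 s with hv
          have hvlt : v < 1 := lt_of_le_of_ne (rho1_le_one hv1 s) hr1
          have hv0 : 0 < v := rho1_pos hv1 s
          have hα1 : (0:ℝ) ≤ 1 - 1/α := by
            have : 1/α ≤ 1 := by rw [div_le_one hα0]; exact hα
            linarith
          have hU : t ≤ (1 - 1/α) / (1 - v) := by
            rw [ht]
            classical
            unfold x1f
            apply Finset.sup'_le
            intro c _
            split_ifs with hc
            · rcases Relation.reflTransGen_iff_eq_or_transGen.mp hc with heq | htr
              · subst heq
                rw [Lfun_eq_zero hr2]
                exact div_nonneg hα1 (by linarith)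
              · have hcb := hyp c s htr
                by_cases hu1 : rho2 v1 v2 c = 1
                · rw [Lfun_eq_zero hu1]; exact div_nonneg hα1 (by linarith)
                · have hult : rho2 v1 v2 c < 1 := lt_of_le_of_ne (rho2_le_one hv1 c) hu1
                  have := conflict_to_bound hα (rho2_pos hv1 hv2 c) hult hv0 hvlt hcb
                  exact max_le (div_nonneg hα1 (by linarith)) this
            · exact div_nonneg hα1 (by linarith)
          have := mul_le_mul_of_nonneg_right hU (by linarith : (0:ℝ) ≤ 1 - v)
          rw [div_mul_cancel₀ _ (by linarith : (1:ℝ) - v ≠ 0)] at this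
          rw [hr2]
          nlinarith
      have hpos : 0 < t * rho1 v1 v2 s + (1 - t) * rho2 v1 v2 s :=
        lt_of_lt_of_le (by positivity) hperf
      have : (t * rho1 v1 v2 s + (1 - t) * rho2 v1 v2 s)⁻¹ ≤ (1/α)⁻¹ := by
        apply inv_anti₀ (by positivity) hperf
      rwa [one_div, inv_inv] at this

end Stmt16
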